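/- Let b ≥ 2 and Ξ_k, ξ_k^{(n)} be as in the canopy-tree random walk model. If 2n ≥ 3k + 5, then ξ_k^{(n)} > (b−1)/(b+1) + (1/4)·b^{−k−1}. -/

import Mathlib

/-- `ζ_h = ∑_{j ≥ h} (b−1)² / ((b^j − 1)(b^{j+1} − 1))`, written as a sum over `j = h + i`. -/
noncomputable def zeta (b h : ℕ) : ℝ :=
  ∑' i : ℕ, ((b : ℝ) - 1) ^ 2 / (((b : ℝ) ^ (h + i) - 1) * ((b : ℝ) ^ (h + i + 1) - 1))

/-- `Ξ_k = (b−1)·b^k·∑_{h > k} b^{h−1}·ζ_h`, written as a sum over `h = k + 1 + i`. -/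
noncomputable def Xi (b k : ℕ) : ℝ :=
  ((b : ℝ) - 1) * (b : ℝ) ^ k * ∑' i : ℕ, (b : ℝ) ^ (k + i) * zeta b (k + 1 + i)

/-- `ξ_k^{(n)} = Ξ_k − (b−1)·∑_{h > n} b^{h−n+2k−1}·ζ_h`, written with `h = n + 1 + i`. -/
noncomputable def xiFin (b k n : ℕ) : ℝ :=
  Xi b k - ((b : ℝ) - 1) * ∑' i : ℕ, (b : ℝ) ^ (2 * k + i) * zeta b (n + 1 + i)

lemma two_le_pow' (r : ℝ) (hr : 2 ≤ r) {j : ℕ} (hj : 1 ≤ j) : 2 ≤ r ^ j :=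
  le_trans hr (by calc r = r^1 := (pow_one r).symm
                     _ ≤ r^j := pow_le_pow_right₀ (by linarith) hj)

lemma sixteen_le_pow (r : ℝ) (hr : 2 ≤ r) {j : ℕ} (hj : 4 ≤ j) : 16 ≤ r ^ j := by
  calc (16:ℝ) = 2^4 := by norm_num
    _ ≤ 2^j := pow_le_pow_right₀ one_le_two hj
    _ ≤ r^j := pow_le_pow_left₀ (by norm_num) hr j

lemma inv_pow_pow (r : ℝ) (m h i : ℕ) : ((r^m)⁻¹)^h * ((r^m)⁻¹)^i = ((r^(h+i))^m)⁻¹ := by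
  rw [← pow_add, ← inv_pow, ← pow_mul, mul_comm m (h+i), pow_mul, inv_pow, inv_pow]

lemma poly1 (r x : ℝ) (hr : 2 ≤ r) (hx : 2 ≤ x) :
    (x-1)*(x*r-1)*(x*r+r+1) ≤ x^3*r^2 := by
  nlinarith [sq_nonneg x, sq_nonneg r, mul_pos (by linarith : (0:ℝ) < x) (by linarith : (0:ℝ) < r)]

lemma keylow (r x : ℝ) (hr : 2 ≤ r) (hx : 2 ≤ x) :
    (x^2*r)⁻¹ + (r+1)*(x^3*r^2)⁻¹ ≤ ((x-1)*(x*r-1))⁻¹ := by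
  have hd : 0 < (x-1)*(x*r-1) := mul_pos (by linarith) (by nlinarith)
  have h1 : (x^2*r)⁻¹ + (r+1)*(x^3*r^2)⁻¹ = (x*r + r + 1)/(x^3*r^2) := by
    field_simp
    ring
  rw [h1, inv_eq_one_div, div_le_div_iff₀ (by positivity) hd, one_mul]
  calc (x*r+r+1) * ((x-1)*(x*r-1)) = (x-1)*(x*r-1)*(x*r+r+1) := by ring
    _ ≤ x^3*r^2 := poly1 r x hr hx

lemma keyhigh (r x : ℝ) (hr : 2 ≤ r) (hx : 2 ≤ x) :
    ((x-1)*(x*r-1))⁻¹ ≤ 4*(x^2*r)⁻¹ := by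
  have hd : 0 < (x-1)*(x*r-1) := mul_pos (by linarith) (by nlinarith)
  have h2 : r*x^2/4 ≤ (x-1)*(x*r-1) := by
    nlinarith [mul_nonneg (by linarith : (0:ℝ) ≤ x-2) (by linarith : (0:ℝ) ≤ r-2),
      mul_nonneg (mul_nonneg (by linarith : (0:ℝ) ≤ x-2) (by linarith : (0:ℝ) ≤ r-2)) (by linarith : (0:ℝ) ≤ x),
      mul_nonneg (by linarith : (0:ℝ) ≤ x-2) (by linarith : (0:ℝ) ≤ x)]
  rw [inv_eq_one_div, show 4*(x^2*r)⁻¹ = 4/(x^2*r) from (div_eq_mul_inv 4 _).symm,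
    div_le_div_iff₀ hd (by positivity)]
  nlinarith

lemma keyfine (r x : ℝ) (hr : 2 ≤ r) (hx : 16 ≤ x) :
    ((x-1)*(x*r-1))⁻¹ ≤ (512/465)*(x^2*r)⁻¹ := by
  have hd : 0 < (x-1)*(x*r-1) := mul_pos (by linarith) (by nlinarith)
  have h2 : (465/512)*(r*x^2) ≤ (x-1)*(x*r-1) := by
    nlinarith [mul_le_mul (by linarith : (15/16)*x ≤ x - 1)
      (by nlinarith : (31/32)*(x*r) ≤ x*r - 1) (by nlinarith) (by linarith)]
  rw [inv_eq_one_div, show (512/465:ℝ)*(x^2*r)⁻¹ = (512/465)/(x^2*r) from (div_eq_mul_inv _ _).symm,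
    div_le_div_iff₀ hd (by positivity)]
  nlinarith

section zetabounds

variable {b : ℕ}

lemma zeta_term_nonneg (hb : 2 ≤ b) (h : ℕ) (hh : 1 ≤ h) (i : ℕ) :
    0 ≤ ((b:ℝ)-1)^2/(((b:ℝ)^(h+i)-1)*((b:ℝ)^(h+i+1)-1)) := by
  have hr : (2:ℝ) ≤ (b:ℝ) := by exact_mod_cast hb
  have hx : (2:ℝ) ≤ (b:ℝ)^(h+i) := two_le_pow' _ hr (by omega)
  have hx2 : (2:ℝ) ≤ (b:ℝ)^(h+i+1) := two_le_pow' _ hr (by omega)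
  exact div_nonneg (sq_nonneg _) (by nlinarith)

lemma zeta_term_le (hb : 2 ≤ b) (h : ℕ) (hh : 1 ≤ h) (i : ℕ) :
    ((b:ℝ)-1)^2/(((b:ℝ)^(h+i)-1)*((b:ℝ)^(h+i+1)-1))
      ≤ (((b:ℝ)-1)^2*(4*((b:ℝ))⁻¹*((((b:ℝ)^2)⁻¹)^h))) * (((b:ℝ)^2)⁻¹)^i := by
  have hr : (2:ℝ) ≤ (b:ℝ) := by exact_mod_cast hb
  set r := (b:ℝ) with hrd
  have hr0 : (0:ℝ) < r := by linarith
  have hx : (2:ℝ) ≤ r^(h+i) := two_le_pow' _ hr (by omega)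
  have e2 : ((r^2)⁻¹)^h * ((r^2)⁻¹)^i = ((r^(h+i))^2)⁻¹ := inv_pow_pow r 2 h i
  have key := keyhigh r (r^(h+i)) hr hx
  calc ((b:ℝ)-1)^2/((r^(h+i)-1)*(r^(h+i+1)-1))
      = (r-1)^2 * ((r^(h+i)-1)*(r^(h+i)*r-1))⁻¹ := by rw [div_eq_mul_inv, pow_succ r (h+i)]
    _ ≤ (r-1)^2 * (4*((r^(h+i))^2*r)⁻¹) := mul_le_mul_of_nonneg_left key (sq_nonneg _)
    _ = (((r:ℝ)-1)^2*(4*r⁻¹*(((r^2)⁻¹)^h))) * ((r^2)⁻¹)^i := by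
        rw [mul_inv, ← e2]; ring

lemma u_facts (hb : 2 ≤ b) : 0 ≤ (((b:ℝ)^2)⁻¹) ∧ (((b:ℝ)^2)⁻¹) < 1 := by
  have hr : (2:ℝ) ≤ (b:ℝ) := by exact_mod_cast hb
  constructor
  · positivity
  · rw [inv_lt_one_iff₀]; right; nlinarith

lemma v_facts (hb : 2 ≤ b) : 0 ≤ (((b:ℝ)^3)⁻¹) ∧ (((b:ℝ)^3)⁻¹) < 1 := by
  have hr : (2:ℝ) ≤ (b:ℝ) := by exact_mod_cast hb
  constructor
  · positivity
  · rw [inv_lt_one_iff₀]; right; nlinarith [sq_nonneg (b:ℝ)]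

lemma zeta_summable (hb : 2 ≤ b) (h : ℕ) (hh : 1 ≤ h) :
    Summable (fun i : ℕ => ((b:ℝ)-1)^2/(((b:ℝ)^(h+i)-1)*((b:ℝ)^(h+i+1)-1))) :=
  Summable.of_nonneg_of_le (zeta_term_nonneg hb h hh) (zeta_term_le hb h hh)
    ((summable_geometric_of_lt_one (u_facts hb).1 (u_facts hb).2).mul_left _)

lemma one_sub_u_inv (hb : 2 ≤ b) : ((1:ℝ) - ((b:ℝ)^2)⁻¹)⁻¹ = (b:ℝ)^2/(((b:ℝ)-1)*((b:ℝ)+1)) := by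
  have hr : (2:ℝ) ≤ (b:ℝ) := by exact_mod_cast hb
  rw [show (1:ℝ)-((b:ℝ)^2)⁻¹ = (((b:ℝ)-1)*((b:ℝ)+1))/(b:ℝ)^2 by field_simp; ring, inv_div]

lemma one_sub_v_inv (hb : 2 ≤ b) : ((1:ℝ) - ((b:ℝ)^3)⁻¹)⁻¹ = (b:ℝ)^3/(((b:ℝ)-1)*((b:ℝ)^2+(b:ℝ)+1)) := by
  have hr : (2:ℝ) ≤ (b:ℝ) := by exact_mod_cast hb
  rw [show (1:ℝ)-((b:ℝ)^3)⁻¹ = (((b:ℝ)-1)*((b:ℝ)^2+(b:ℝ)+1))/(b:ℝ)^3 by field_simp; ring, inv_div]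

lemma zeta_le_crude (hb : 2 ≤ b) (h : ℕ) (hh : 1 ≤ h) :
    zeta b h ≤ 4*((b:ℝ)-1)*(b:ℝ)/((b:ℝ)+1) * (((b:ℝ)^2)⁻¹)^h := by
  have hr : (2:ℝ) ≤ (b:ℝ) := by exact_mod_cast hb
  have hle := Summable.tsum_le_tsum (zeta_term_le hb h hh) (zeta_summable hb h hh)
    ((summable_geometric_of_lt_one (u_facts hb).1 (u_facts hb).2).mul_left _)
  rw [tsum_mul_left, tsum_geometric_of_lt_one (u_facts hb).1 (u_facts hb).2] at hle
  refine le_trans hle (le_of_eq ?_)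
  rw [one_sub_u_inv hb]
  have h1 : ((b:ℝ)-1) ≠ 0 := by intro h'; linarith
  have h2 : ((b:ℝ)+1) ≠ 0 := by intro h'; linarith
  have h3 : ((b:ℝ)) ≠ 0 := by intro h'; linarith
  generalize (((b:ℝ)^2)⁻¹) ^ h = U
  field_simp

lemma zeta_nonneg (hb : 2 ≤ b) (h : ℕ) (hh : 1 ≤ h) : 0 ≤ zeta b h :=
  tsum_nonneg (zeta_term_nonneg hb h hh)

lemma zeta_term_le_fine (hb : 2 ≤ b) (h : ℕ) (hh : 4 ≤ h) (i : ℕ) :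
    ((b:ℝ)-1)^2/(((b:ℝ)^(h+i)-1)*((b:ℝ)^(h+i+1)-1))
      ≤ (((b:ℝ)-1)^2*((512/465)*((b:ℝ))⁻¹*((((b:ℝ)^2)⁻¹)^h))) * (((b:ℝ)^2)⁻¹)^i := by
  have hr : (2:ℝ) ≤ (b:ℝ) := by exact_mod_cast hb
  set r := (b:ℝ) with hrd
  have hx : (16:ℝ) ≤ r^(h+i) := sixteen_le_pow _ hr (by omega)
  have e2 : ((r^2)⁻¹)^h * ((r^2)⁻¹)^i = ((r^(h+i))^2)⁻¹ := inv_pow_pow r 2 h i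
  have key := keyfine r (r^(h+i)) hr hx
  calc ((b:ℝ)-1)^2/((r^(h+i)-1)*(r^(h+i+1)-1))
      = (r-1)^2 * ((r^(h+i)-1)*(r^(h+i)*r-1))⁻¹ := by rw [div_eq_mul_inv, pow_succ r (h+i)]
    _ ≤ (r-1)^2 * ((512/465)*((r^(h+i))^2*r)⁻¹) := mul_le_mul_of_nonneg_left key (sq_nonneg _)
    _ = (((r:ℝ)-1)^2*((512/465)*r⁻¹*(((r^2)⁻¹)^h))) * ((r^2)⁻¹)^i := by
        rw [mul_inv, ← e2]; ring

lemma zeta_le_fine (hb : 2 ≤ b) (h : ℕ) (hh : 4 ≤ h) :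
    zeta b h ≤ (512/465)*((b:ℝ)-1)*(b:ℝ)/((b:ℝ)+1) * (((b:ℝ)^2)⁻¹)^h := by
  have hr : (2:ℝ) ≤ (b:ℝ) := by exact_mod_cast hb
  have hle := Summable.tsum_le_tsum (zeta_term_le_fine hb h hh) (zeta_summable hb h (by omega))
    ((summable_geometric_of_lt_one (u_facts hb).1 (u_facts hb).2).mul_left _)
  rw [tsum_mul_left, tsum_geometric_of_lt_one (u_facts hb).1 (u_facts hb).2] at hle
  refine le_trans hle (le_of_eq ?_)
  rw [one_sub_u_inv hb]
  have h1 : ((b:ℝ)-1) ≠ 0 := by intro h'; linarith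
  have h2 : ((b:ℝ)+1) ≠ 0 := by intro h'; linarith
  have h3 : ((b:ℝ)) ≠ 0 := by intro h'; linarith
  generalize (((b:ℝ)^2)⁻¹) ^ h = U
  field_simp

lemma zeta_term_ge (hb : 2 ≤ b) (h : ℕ) (hh : 1 ≤ h) (i : ℕ) :
    (((b:ℝ)-1)^2*(((b:ℝ))⁻¹*((((b:ℝ)^2)⁻¹)^h))) * (((b:ℝ)^2)⁻¹)^i
      + (((b:ℝ)-1)^2*(((b:ℝ)+1)*(((b:ℝ))^2)⁻¹*((((b:ℝ)^3)⁻¹)^h))) * (((b:ℝ)^3)⁻¹)^i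
      ≤ ((b:ℝ)-1)^2/(((b:ℝ)^(h+i)-1)*((b:ℝ)^(h+i+1)-1)) := by
  have hr : (2:ℝ) ≤ (b:ℝ) := by exact_mod_cast hb
  set r := (b:ℝ) with hrd
  have hx : (2:ℝ) ≤ r^(h+i) := two_le_pow' _ hr (by omega)
  have e2 : ((r^2)⁻¹)^h * ((r^2)⁻¹)^i = ((r^(h+i))^2)⁻¹ := inv_pow_pow r 2 h i
  have e3 : ((r^3)⁻¹)^h * ((r^3)⁻¹)^i = ((r^(h+i))^3)⁻¹ := inv_pow_pow r 3 h i
  have key := keylow r (r^(h+i)) hr hx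
  calc (((r:ℝ)-1)^2*(r⁻¹*(((r^2)⁻¹)^h))) * ((r^2)⁻¹)^i
        + ((r-1)^2*((r+1)*(r^2)⁻¹*(((r^3)⁻¹)^h))) * ((r^3)⁻¹)^i
      = (r-1)^2 * (((r^(h+i))^2*r)⁻¹ + (r+1)*((r^(h+i))^3*r^2)⁻¹) := by
        rw [mul_inv, mul_inv, ← e2, ← e3]; ring
    _ ≤ (r-1)^2 * ((r^(h+i)-1)*(r^(h+i)*r-1))⁻¹ := mul_le_mul_of_nonneg_left key (sq_nonneg _)
    _ = (r-1)^2/((r^(h+i)-1)*(r^(h+i+1)-1)) := by rw [div_eq_mul_inv, pow_succ r (h+i)]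

lemma zeta_ge (hb : 2 ≤ b) (h : ℕ) (hh : 1 ≤ h) :
    ((b:ℝ)-1)*(b:ℝ)/((b:ℝ)+1) * (((b:ℝ)^2)⁻¹)^h
      + ((b:ℝ)-1)*((b:ℝ)+1)*(b:ℝ)/((b:ℝ)^2+(b:ℝ)+1) * (((b:ℝ)^3)⁻¹)^h ≤ zeta b h := by
  have hr : (2:ℝ) ≤ (b:ℝ) := by exact_mod_cast hb
  have hsum1 : Summable (fun i : ℕ => (((b:ℝ)-1)^2*(((b:ℝ))⁻¹*((((b:ℝ)^2)⁻¹)^h))) * (((b:ℝ)^2)⁻¹)^i) :=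
    (summable_geometric_of_lt_one (u_facts hb).1 (u_facts hb).2).mul_left _
  have hsum2 : Summable (fun i : ℕ => (((b:ℝ)-1)^2*(((b:ℝ)+1)*(((b:ℝ))^2)⁻¹*((((b:ℝ)^3)⁻¹)^h))) * (((b:ℝ)^3)⁻¹)^i) :=
    (summable_geometric_of_lt_one (v_facts hb).1 (v_facts hb).2).mul_left _
  have hle := Summable.tsum_le_tsum (zeta_term_ge hb h hh) (hsum1.add hsum2) (zeta_summable hb h hh)
  rw [Summable.tsum_add hsum1 hsum2, tsum_mul_left, tsum_mul_left,
    tsum_geometric_of_lt_one (u_facts hb).1 (u_facts hb).2,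
    tsum_geometric_of_lt_one (v_facts hb).1 (v_facts hb).2] at hle
  refine le_trans (le_of_eq ?_) hle
  rw [one_sub_u_inv hb, one_sub_v_inv hb]
  have h1 : ((b:ℝ)-1) ≠ 0 := by intro h'; linarith
  have h2 : ((b:ℝ)+1) ≠ 0 := by intro h'; linarith
  have h3 : ((b:ℝ)) ≠ 0 := by intro h'; linarith
  have h4 : ((b:ℝ)^2+(b:ℝ)+1) ≠ 0 := by nlinarith
  generalize (((b:ℝ)^2)⁻¹) ^ h = U
  generalize (((b:ℝ)^3)⁻¹) ^ h = V
  field_simp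

end zetabounds

lemma inv_pow_swap (r : ℝ) (m k : ℕ) : ((r^m)⁻¹)^k = ((r^k)^m)⁻¹ := by
  rw [← inv_pow, ← pow_mul, mul_comm, pow_mul, inv_pow, inv_pow]

lemma w_facts {b : ℕ} (hb : 2 ≤ b) : 0 ≤ ((b:ℝ))⁻¹ ∧ ((b:ℝ))⁻¹ < 1 := by
  have hr : (2:ℝ) ≤ (b:ℝ) := by exact_mod_cast hb
  constructor
  · positivity
  · rw [inv_lt_one_iff₀]; right; linarith

lemma r_mul_u {b : ℕ} (hb : 2 ≤ b) : (b:ℝ) * (((b:ℝ)^2)⁻¹) = ((b:ℝ))⁻¹ := by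
  have hr : (2:ℝ) ≤ (b:ℝ) := by exact_mod_cast hb
  have h3 : ((b:ℝ)) ≠ 0 := by intro h'; linarith
  field_simp

lemma r_mul_v {b : ℕ} (hb : 2 ≤ b) : (b:ℝ) * (((b:ℝ)^3)⁻¹) = (((b:ℝ)^2)⁻¹) := by
  have hr : (2:ℝ) ≤ (b:ℝ) := by exact_mod_cast hb
  have h3 : ((b:ℝ)) ≠ 0 := by intro h'; linarith
  field_simp

lemma one_sub_w_inv {b : ℕ} (hb : 2 ≤ b) : ((1:ℝ) - ((b:ℝ))⁻¹)⁻¹ = (b:ℝ)/((b:ℝ)-1) := by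
  have hr : (2:ℝ) ≤ (b:ℝ) := by exact_mod_cast hb
  have h3 : ((b:ℝ)) ≠ 0 := by intro h'; linarith
  rw [show (1:ℝ)-((b:ℝ))⁻¹ = ((b:ℝ)-1)/(b:ℝ) by field_simp, inv_div]

section XiBounds

variable {b : ℕ}

/-- pointwise upper bound for the Xi series -/
lemma Xi_term_le (hb : 2 ≤ b) (k : ℕ) (i : ℕ) :
    (b:ℝ)^(k+i) * zeta b (k+1+i)
      ≤ (4*((b:ℝ)-1)*(b:ℝ)/((b:ℝ)+1) * ((b:ℝ)^k * (((b:ℝ)^2)⁻¹)^(k+1))) * (((b:ℝ))⁻¹)^i := by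
  have hr : (2:ℝ) ≤ (b:ℝ) := by exact_mod_cast hb
  set r := (b:ℝ) with hrd
  have h0 : (0:ℝ) ≤ r^(k+i) := by positivity
  have hz := zeta_le_crude hb (k+1+i) (by omega)
  have step := mul_le_mul_of_nonneg_left hz h0
  refine le_trans step (le_of_eq ?_)
  rw [show k+1+i = (k+1)+i by omega, pow_add ((r^2)⁻¹) (k+1) i, pow_add r k i,
    show (r⁻¹:ℝ) = r*(r^2)⁻¹ from (r_mul_u hb).symm, mul_pow]
  ring

lemma Xi_term_nonneg (hb : 2 ≤ b) (k : ℕ) (i : ℕ) :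
    0 ≤ (b:ℝ)^(k+i) * zeta b (k+1+i) :=
  mul_nonneg (by positivity) (zeta_nonneg hb _ (by omega))

lemma Xi_summable (hb : 2 ≤ b) (k : ℕ) :
    Summable (fun i : ℕ => (b:ℝ)^(k+i) * zeta b (k+1+i)) :=
  Summable.of_nonneg_of_le (Xi_term_nonneg hb k) (Xi_term_le hb k)
    ((summable_geometric_of_lt_one (w_facts hb).1 (w_facts hb).2).mul_left _)

/-- pointwise lower bound for the Xi series -/
lemma Xi_term_ge (hb : 2 ≤ b) (k : ℕ) (i : ℕ) :
    (((b:ℝ)-1)*(b:ℝ)/((b:ℝ)+1) * ((b:ℝ)^k * (((b:ℝ)^2)⁻¹)^(k+1))) * (((b:ℝ))⁻¹)^i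
      + (((b:ℝ)-1)*((b:ℝ)+1)*(b:ℝ)/((b:ℝ)^2+(b:ℝ)+1) * ((b:ℝ)^k * (((b:ℝ)^3)⁻¹)^(k+1))) * (((b:ℝ)^2)⁻¹)^i
      ≤ (b:ℝ)^(k+i) * zeta b (k+1+i) := by
  have hr : (2:ℝ) ≤ (b:ℝ) := by exact_mod_cast hb
  set r := (b:ℝ) with hrd
  have h0 : (0:ℝ) ≤ r^(k+i) := by positivity
  have hz := zeta_ge hb (k+1+i) (by omega)
  have step := mul_le_mul_of_nonneg_left hz h0
  refine le_trans (le_of_eq ?_) step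
  rw [show k+1+i = (k+1)+i by omega, pow_add ((r^2)⁻¹) (k+1) i, pow_add ((r^3)⁻¹) (k+1) i,
    pow_add r k i]
  nth_rewrite 1 [show (r⁻¹:ℝ) = r*(r^2)⁻¹ from (r_mul_u hb).symm]
  nth_rewrite 3 [show ((r^2)⁻¹:ℝ) = r*(r^3)⁻¹ from (r_mul_v hb).symm]
  rw [mul_pow, mul_pow]
  ring

lemma Xi_ge (hb : 2 ≤ b) (k : ℕ) :
    ((b:ℝ)-1)/((b:ℝ)+1) + ((b:ℝ)-1)*(b:ℝ)/((b:ℝ)^2+(b:ℝ)+1) * (((b:ℝ))⁻¹)^(k+1) ≤ Xi b k := by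
  have hr : (2:ℝ) ≤ (b:ℝ) := by exact_mod_cast hb
  set r := (b:ℝ) with hrd
  have hs1 : Summable (fun i : ℕ => ((r-1)*r/(r+1) * (r^k * ((r^2)⁻¹)^(k+1))) * (r⁻¹)^i) :=
    (summable_geometric_of_lt_one (w_facts hb).1 (w_facts hb).2).mul_left _
  have hs2 : Summable (fun i : ℕ => ((r-1)*(r+1)*r/(r^2+r+1) * (r^k * ((r^3)⁻¹)^(k+1))) * ((r^2)⁻¹)^i) :=
    (summable_geometric_of_lt_one (u_facts hb).1 (u_facts hb).2).mul_left _
  have hle := Summable.tsum_le_tsum (Xi_term_ge hb k) (hs1.add hs2) (Xi_summable hb k)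
  rw [Summable.tsum_add hs1 hs2, tsum_mul_left, tsum_mul_left,
    tsum_geometric_of_lt_one (w_facts hb).1 (w_facts hb).2,
    tsum_geometric_of_lt_one (u_facts hb).1 (u_facts hb).2] at hle
  have hc : (0:ℝ) ≤ (r-1)*r^k := mul_nonneg (by linarith) (by positivity)
  have step := mul_le_mul_of_nonneg_left hle hc
  rw [Xi]
  refine le_trans (le_of_eq ?_) step
  rw [one_sub_w_inv hb, one_sub_u_inv hb, pow_succ ((r^2)⁻¹) k, pow_succ ((r^3)⁻¹) k,
    pow_succ (r⁻¹) k, inv_pow_swap r 2 k, inv_pow_swap r 3 k, inv_pow r k]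
  have h1 : (r-1) ≠ 0 := by intro h'; linarith
  have h2 : (r+1) ≠ 0 := by intro h'; linarith
  have h3 : r ≠ 0 := by intro h'; linarith
  have h4 : (r^2+r+1) ≠ 0 := by nlinarith
  have hX0 : r^k ≠ 0 := pow_ne_zero _ h3
  rw [← hrd]
  generalize hXX : r^k = X at hX0 ⊢
  field_simp

end XiBounds

section TailBounds
variable {b : ℕ}

lemma tail_term_nonneg (hb : 2 ≤ b) (k n : ℕ) (hn : 3 ≤ n) (i : ℕ) :
    0 ≤ (b:ℝ)^(2*k+i) * zeta b (n+1+i) :=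
  mul_nonneg (by positivity) (zeta_nonneg hb _ (by omega))

lemma tail_term_le (hb : 2 ≤ b) (k n : ℕ) (hn : 3 ≤ n) (i : ℕ) :
    (b:ℝ)^(2*k+i) * zeta b (n+1+i)
      ≤ ((512/465)*((b:ℝ)-1)*(b:ℝ)/((b:ℝ)+1) * ((b:ℝ)^(2*k) * (((b:ℝ)^2)⁻¹)^(n+1))) * (((b:ℝ))⁻¹)^i := by
  have hr : (2:ℝ) ≤ (b:ℝ) := by exact_mod_cast hb
  set r := (b:ℝ) with hrd
  have h0 : (0:ℝ) ≤ r^(2*k+i) := by positivity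
  have hz := zeta_le_fine hb (n+1+i) (by omega)
  have step := mul_le_mul_of_nonneg_left hz h0
  refine le_trans step (le_of_eq ?_)
  rw [show n+1+i = (n+1)+i by omega, pow_add ((r^2)⁻¹) (n+1) i, pow_add r (2*k) i,
    show (r⁻¹:ℝ) = r*(r^2)⁻¹ from (r_mul_u hb).symm, mul_pow]
  ring

lemma tail_summable (hb : 2 ≤ b) (k n : ℕ) (hn : 3 ≤ n) :
    Summable (fun i : ℕ => (b:ℝ)^(2*k+i) * zeta b (n+1+i)) :=
  Summable.of_nonneg_of_le (tail_term_nonneg hb k n hn) (tail_term_le hb k n hn)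
    ((summable_geometric_of_lt_one (w_facts hb).1 (w_facts hb).2).mul_left _)

lemma tail_le (hb : 2 ≤ b) (k n : ℕ) (hn : 3 ≤ n) :
    ((b:ℝ)-1) * ∑' i : ℕ, (b:ℝ)^(2*k+i) * zeta b (n+1+i)
      ≤ (512/465)*((b:ℝ)-1)/((b:ℝ)+1) * ((b:ℝ)^(2*k) * (((b:ℝ))⁻¹)^(2*n)) := by
  have hr : (2:ℝ) ≤ (b:ℝ) := by exact_mod_cast hb
  set r := (b:ℝ) with hrd
  have hle := Summable.tsum_le_tsum (tail_term_le hb k n hn) (tail_summable hb k n hn)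
    ((summable_geometric_of_lt_one (w_facts hb).1 (w_facts hb).2).mul_left _)
  rw [tsum_mul_left, tsum_geometric_of_lt_one (w_facts hb).1 (w_facts hb).2] at hle
  have step := mul_le_mul_of_nonneg_left hle (by linarith : (0:ℝ) ≤ r - 1)
  refine le_trans step (le_of_eq ?_)
  rw [one_sub_w_inv hb, pow_succ ((r^2)⁻¹) n, inv_pow_swap r 2 n,
    inv_pow r (2*n), show 2*n = n*2 by omega, pow_mul r n 2]
  have h1 : (r-1) ≠ 0 := by intro h'; linarith
  have h2 : (r+1) ≠ 0 := by intro h'; linarith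
  have h3 : r ≠ 0 := by intro h'; linarith
  have hX0 : r^n ≠ 0 := pow_ne_zero _ h3
  rw [← hrd]
  generalize hXX : r^n = X at hX0 ⊢
  field_simp

end TailBounds

lemma polyfinal (r : ℝ) (hr : 2 ≤ r) :
    1/4 < (r-1)*r/(r^2+r+1) - (512/465)*(r-1)/((r+1)*r^4) := by
  have h1 : 0 < r^2+r+1 := by nlinarith
  have h2 : 0 < (r+1)*r^4 := by positivity
  rw [lt_sub_iff_add_lt, div_add_div _ _ (by positivity) (by positivity), div_lt_div_iff₀ (by positivity) h1]
  nlinarith [pow_pos (by linarith : (0:ℝ) < r) 4, pow_pos (by linarith : (0:ℝ) < r) 5, pow_pos (by linarith : (0:ℝ) < r) 6, mul_nonneg (by linarith : (0:ℝ) ≤ r - 2) (pow_pos (by linarith : (0:ℝ) < r) 6).le, mul_nonneg (by linarith : (0:ℝ) ≤ r - 2) (pow_pos (by linarith : (0:ℝ) < r) 5).le, mul_nonneg (by linarith : (0:ℝ) ≤ r - 2) (pow_pos (by linarith : (0:ℝ) < r) 4).le, mul_nonneg (by linarith : (0:ℝ) ≤ r - 2) (pow_pos (by linarith : (0:ℝ)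 < r) 3).le]

/-- If `2n ≥ 3k + 5`, then `ξ_k^{(n)} > (b−1)/(b+1) + (1/4)·b^{−k−1}`. -/
theorem stmt14 (b : ℕ) (hb : 2 ≤ b) (k n : ℕ) (hkn : 3 * k + 5 ≤ 2 * n) :
    ((b : ℝ) - 1) / ((b : ℝ) + 1) + (1 / 4) * (b : ℝ) ^ (-((k : ℤ) + 1)) < xiFin b k n := by
  have hr : (2:ℝ) ≤ (b:ℝ) := by exact_mod_cast hb
  set r := (b:ℝ) with hrd
  have hn : 3 ≤ n := by omega
  have h3 : r ≠ 0 := by intro h'; linarith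
  have hXi := Xi_ge hb k
  have htail := tail_le hb k n hn
  -- power bookkeeping
  have hw0 : (0:ℝ) ≤ r⁻¹ := (w_facts hb).1
  have hw1 : r⁻¹ < 1 := (w_facts hb).2
  have hpow1 : (r⁻¹)^(2*n) ≤ (r⁻¹)^(3*k+5) := pow_le_pow_of_le_one hw0 hw1.le hkn
  have e1 : r^(2*k)*(r⁻¹)^(2*k) = 1 := by
    rw [← mul_pow, mul_inv_cancel₀ h3, one_pow]
  have e2 : r^(2*k) * (r⁻¹)^(3*k+5) = (r⁻¹)^(k+1) * (r^4)⁻¹ := by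
    calc r^(2*k) * (r⁻¹)^(3*k+5)
        = (r^(2*k)*(r⁻¹)^(2*k)) * ((r⁻¹)^(k+1) * (r⁻¹)^4) := by
          rw [show 3*k+5 = 2*k+((k+1)+4) by omega, pow_add, pow_add]; ring
      _ = (r⁻¹)^(k+1) * (r^4)⁻¹ := by rw [e1, one_mul]; simp [inv_pow]
  have hpow2 : r^(2*k) * (r⁻¹)^(2*n) ≤ (r⁻¹)^(k+1) * (r^4)⁻¹ := by
    rw [← e2]
    exact mul_le_mul_of_nonneg_left hpow1 (by positivity)
  have hC : (0:ℝ) ≤ (512/465)*(r-1)/(r+1) := by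
    apply div_nonneg (by linarith) (by linarith)
  have htail2 : (r-1) * ∑' i : ℕ, r^(2*k+i) * zeta b (n+1+i)
      ≤ (512/465)*(r-1)/(r+1) * ((r⁻¹)^(k+1) * (r^4)⁻¹) :=
    le_trans htail (mul_le_mul_of_nonneg_left hpow2 hC)
  -- final strict inequality on coefficients
  have hpf := polyfinal r hr
  have hwpos : (0:ℝ) < (r⁻¹)^(k+1) := by positivity
  have hstrict := mul_lt_mul_of_pos_right hpf hwpos
  have eC : ((r-1)*r/(r^2+r+1) - (512/465)*(r-1)/((r+1)*r^4)) * (r⁻¹)^(k+1)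
      = (r-1)*r/(r^2+r+1) * (r⁻¹)^(k+1) - (512/465)*(r-1)/(r+1) * ((r⁻¹)^(k+1) * (r^4)⁻¹) := by
    have h2' : (r+1) ≠ 0 := by intro h'; linarith
    have h4' : (r^2+r+1) ≠ 0 := by nlinarith
    field_simp
  rw [eC] at hstrict
  -- zpow conversion
  have hz : r ^ (-((k:ℤ)+1)) = (r⁻¹)^(k+1) := by
    rw [show -((k:ℤ)+1) = -((k+1:ℕ):ℤ) by push_cast; ring, zpow_neg, zpow_natCast, inv_pow]
  rw [hz]
  unfold xiFin
  linarith [hXi, htail2, hstrict]
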